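/- Let D be a complex m×m matrix, and let L, K be positive reals. If every diagonal entry of D equals L and the sum of squared absolute values of the off-diagonal entries is at most K, then rank(D) ≥ m − K/L². -/

import Mathlib

open Finset

open scoped ComplexInnerProductSpace in
private lemma trace_sq_le_rank (m : ℕ) (D : Matrix (Fin m) (Fin m) ℂ) :
    ‖D.trace‖ ^ 2 ≤ (D.rank : ℝ) * ∑ i : Fin m, ∑ j : Fin m, ‖D i j‖ ^ 2 := by
  classical
  let T : EuclideanSpace ℂ (Fin m) →ₗ[ℂ] EuclideanSpace ℂ (Fin m) := Matrix.toEuclideanLin D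
  let V : Submodule ℂ (EuclideanSpace ℂ (Fin m)) := LinearMap.range T
  have hrank : D.rank = Module.finrank ℂ V := by
    rw [D.rank_eq_finrank_range_toLin (PiLp.basisFun 2 ℂ (Fin m)) (PiLp.basisFun 2 ℂ (Fin m))]
    rfl
  set r := Module.finrank ℂ V with hrdef
  let b := stdOrthonormalBasis ℂ V
  let w : Fin r → EuclideanSpace ℂ (Fin m) := fun k => (b k : EuclideanSpace ℂ (Fin m))
  have hw : Orthonormal ℂ w := by
    have hb := b.orthonormal
    rw [orthonormal_iff_ite] at hb ⊢
    intro i j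
    simpa [w, Submodule.coe_inner] using hb i j
  have hTapply : ∀ (x : EuclideanSpace ℂ (Fin m)) (i : Fin m), T x i = ∑ j, D i j * x j := by
    intro x i; rfl
  have hexp : ∀ (x : EuclideanSpace ℂ (Fin m)) (hx : x ∈ V) (i : Fin m),
      x i = ∑ k, ⟪w k, x⟫ * w k i := by
    intro x hx i
    let ev : EuclideanSpace ℂ (Fin m) →ₗ[ℂ] ℂ :=
      (LinearMap.proj i).comp (WithLp.linearEquiv 2 ℂ (Fin m → ℂ)).toLinearMap
    have hev : ∀ y : EuclideanSpace ℂ (Fin m), ev y = y i := fun y => rfl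
    have h := congrArg (fun y : V => ev (y : EuclideanSpace ℂ (Fin m))) (b.sum_repr' ⟨x, hx⟩)
    simp only at h
    rw [← hev x, ← h, AddSubmonoidClass.coe_finset_sum, map_sum]
    refine Finset.sum_congr rfl fun k _ => ?_
    rw [Submodule.coe_smul, map_smul, hev, smul_eq_mul]
    rfl
  have htr : D.trace = ∑ k, ⟪w k, T (w k)⟫ := by
    have hcol : ∀ j : Fin m, ((WithLp.equiv 2 (Fin m → ℂ)).symm fun i => D i j) ∈ V := by
      intro j
      refine ⟨((WithLp.equiv 2 (Fin m → ℂ)).symm (Pi.single j 1)), ?_⟩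
      ext i
      rw [hTapply]
      simp [Pi.single_apply]
    have h1 : D.trace = ∑ j, ∑ k, ⟪w k, ((WithLp.equiv 2 (Fin m → ℂ)).symm fun i => D i j)⟫ * w k j := by
      rw [Matrix.trace]
      refine Finset.sum_congr rfl fun j _ => ?_
      exact hexp _ (hcol j) j
    rw [h1, Finset.sum_comm]
    refine Finset.sum_congr rfl fun k _ => ?_
    simp only [PiLp.inner_apply, RCLike.inner_apply, hTapply]
    simp only [Finset.sum_mul, Finset.mul_sum]
    rw [Finset.sum_comm]
    refine Finset.sum_congr rfl fun i _ => Finset.sum_congr rfl fun j _ => ?_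
    simp only [WithLp.equiv_symm_apply, WithLp.ofLp_toLp]
    ring
  have hnorm : ‖D.trace‖ ≤ ∑ k, ‖T (w k)‖ := by
    rw [htr]
    refine (norm_sum_le _ _).trans (Finset.sum_le_sum fun k _ => ?_)
    calc ‖⟪w k, T (w k)⟫‖ ≤ ‖w k‖ * ‖T (w k)‖ := norm_inner_le_norm _ _
      _ = ‖T (w k)‖ := by rw [hw.1 k, one_mul]
  have hsq : (∑ k, ‖T (w k)‖) ^ 2 ≤ (r : ℝ) * ∑ k, ‖T (w k)‖ ^ 2 := by
    simpa using sq_sum_le_card_mul_sum_sq (s := (Finset.univ : Finset (Fin r)))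
      (f := fun k => ‖T (w k)‖)
  have hbessel : ∑ k, ‖T (w k)‖ ^ 2 ≤ ∑ i : Fin m, ∑ j : Fin m, ‖D i j‖ ^ 2 := by
    have hpt : ∀ k, ‖T (w k)‖ ^ 2
        = ∑ i : Fin m,
            ‖⟪w k, ((WithLp.equiv 2 (Fin m → ℂ)).symm fun j => (starRingEnd ℂ) (D i j))⟫‖ ^ 2 := by
      intro k
      rw [PiLp.norm_sq_eq_of_L2]
      refine Finset.sum_congr rfl fun i _ => ?_
      have h : ⟪w k, ((WithLp.equiv 2 (Fin m → ℂ)).symm fun j => (starRingEnd ℂ) (D i j))⟫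
          = (starRingEnd ℂ) (T (w k) i) := by
        rw [hTapply]
        simp only [PiLp.inner_apply, RCLike.inner_apply, map_sum, map_mul,
          RingHomCompTriple.comp_apply]
        refine Finset.sum_congr rfl fun j _ => ?_
        simp only [WithLp.equiv_symm_apply, WithLp.ofLp_toLp]
      rw [h, RCLike.norm_conj]
    calc ∑ k, ‖T (w k)‖ ^ 2
        = ∑ i : Fin m, ∑ k,
            ‖⟪w k, ((WithLp.equiv 2 (Fin m → ℂ)).symm fun j => (starRingEnd ℂ) (D i j))⟫‖ ^ 2 := by
          rw [← Finset.sum_comm]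
          exact Finset.sum_congr rfl fun k _ => hpt k
      _ ≤ ∑ i : Fin m, ∑ j : Fin m, ‖D i j‖ ^ 2 := by
          refine Finset.sum_le_sum fun i _ => ?_
          have h2 := hw.sum_inner_products_le
            (x := ((WithLp.equiv 2 (Fin m → ℂ)).symm fun j => (starRingEnd ℂ) (D i j)))
            (s := Finset.univ)
          refine h2.trans_eq ?_
          rw [PiLp.norm_sq_eq_of_L2]
          refine Finset.sum_congr rfl fun j _ => ?_
          simp only [WithLp.equiv_symm_apply, WithLp.ofLp_toLp, RCLike.norm_conj]
  calc ‖D.trace‖ ^ 2 ≤ (∑ k, ‖T (w k)‖) ^ 2 :=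
        pow_le_pow_left₀ (norm_nonneg _) hnorm 2
    _ ≤ (r : ℝ) * ∑ k, ‖T (w k)‖ ^ 2 := hsq
    _ ≤ (r : ℝ) * ∑ i : Fin m, ∑ j : Fin m, ‖D i j‖ ^ 2 :=
        mul_le_mul_of_nonneg_left hbessel (by positivity)
    _ = (D.rank : ℝ) * ∑ i : Fin m, ∑ j : Fin m, ‖D i j‖ ^ 2 := by rw [hrank]

theorem stmt_0 (m : ℕ) (D : Matrix (Fin m) (Fin m) ℂ) (L K : ℝ)
    (hL : 0 < L) (hK : 0 < K)
    (hdiag : ∀ i, D i i = (L : ℂ))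
    (hoff : ∑ i : Fin m, ∑ j ∈ Finset.univ \ {i}, ‖D i j‖ ^ 2 ≤ K) :
    (m : ℝ) - K / L ^ 2 ≤ (D.rank : ℝ) := by
  classical
  have key := trace_sq_le_rank m D
  have htr : ‖D.trace‖ = m * L := by
    have h : D.trace = (m : ℂ) * (L : ℂ) := by
      rw [Matrix.trace]
      simp [Matrix.diag, hdiag]
    rw [h]
    simp [abs_of_pos hL, hL.le]
  have hrow : ∀ i : Fin m, ∑ j : Fin m, ‖D i j‖ ^ 2
      = (∑ j ∈ Finset.univ \ {i}, ‖D i j‖ ^ 2) + L ^ 2 := by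
    intro i
    rw [← Finset.sum_erase_add _ _ (Finset.mem_univ i), Finset.sdiff_singleton_eq_erase]
    congr 1
    rw [hdiag i]
    simp [abs_of_pos hL]
  have hfrob : ∑ i : Fin m, ∑ j : Fin m, ‖D i j‖ ^ 2 ≤ m * L ^ 2 + K := by
    have h : ∑ i : Fin m, ∑ j : Fin m, ‖D i j‖ ^ 2
        = (∑ i : Fin m, ∑ j ∈ Finset.univ \ {i}, ‖D i j‖ ^ 2) + m * L ^ 2 := by
      rw [Finset.sum_congr rfl fun i _ => hrow i, Finset.sum_add_distrib]
      simp [Finset.card_univ, mul_comm]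
    rw [h]
    linarith
  have h2 : ((m : ℝ) * L) ^ 2 ≤ (D.rank : ℝ) * (m * L ^ 2 + K) := by
    calc ((m : ℝ) * L) ^ 2 = ‖D.trace‖ ^ 2 := by rw [htr]
      _ ≤ (D.rank : ℝ) * ∑ i : Fin m, ∑ j : Fin m, ‖D i j‖ ^ 2 := key
      _ ≤ (D.rank : ℝ) * (m * L ^ 2 + K) :=
          mul_le_mul_of_nonneg_left hfrob (Nat.cast_nonneg _)
  have hL2 : (0:ℝ) < L ^ 2 := by positivity
  have hdiv : K / L ^ 2 * L ^ 2 = K := div_mul_cancel₀ _ (ne_of_gt hL2)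
  have hxpos : 0 < K / L ^ 2 := div_pos hK hL2
  have hdenom : (0:ℝ) < m * L ^ 2 + K := by positivity
  nlinarith [h2, hdiv, hxpos, hdenom, mul_pos hxpos hK, sq_nonneg K,
    Nat.cast_nonneg (α := ℝ) D.rank]
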